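/- arXiv:2411.06250 — 2 statements merged into one kernel-verified Lean document; each statement's English description precedes it below -/
import Mathlib

section
/- Let n ≥ 2 be an integer, x ≥ 0 a real number, and a_0(n), a_1(n) real sequences. Then V_{n,1}(e_0; x) = 2a_0(n) − a_1(n), where e_0(t) = 1 (in particular the defining series and integrals converge absolutely). -/
open MeasureTheory Filter Topology

/-- Baskakov basis function `p_{n,k}(x) = C(n+k-1, k) x^k / (1+x)^{n+k}`. -/
noncomputable def bask (n k : ℕ) (x : ℝ) : ℝ :=
  (Nat.choose (n + k - 1) k : ℝ) * x ^ k / (1 + x) ^ (n + k)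

/-- Modified basis `p^1_{n,k}(x) = a(x,n) p_{n+1,k}(x) + b(x,n) p_{n+1,k-1}(x)`,
with `p_{n+1,-1} = 0`. -/
noncomputable def p1 (a0 a1 : ℕ → ℝ) (n k : ℕ) (x : ℝ) : ℝ :=
  (a0 n + a1 n * x) * bask (n + 1) k x
    + (a0 n - a1 n * (1 + x)) * (if k = 0 then 0 else bask (n + 1) (k - 1) x)

section Aux
open Set

lemma one_add_tendsto (j : ℕ) : Tendsto (fun t : ℝ => (1+t)^(j+1)) atTop atTop :=
  (tendsto_pow_atTop (Nat.succ_ne_zero j)).comp (tendsto_atTop_add_const_left _ 1 tendsto_id)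

lemma tendsto_base (m : ℕ) :
    Tendsto (fun t : ℝ => -(((m:ℝ)+1)⁻¹ * ((1+t)^(m+1))⁻¹)) atTop (𝓝 0) := by
  have h := (one_add_tendsto m).inv_tendsto_atTop
  have := (h.const_mul (((m:ℝ)+1)⁻¹)).neg
  simpa using this

lemma aux_deriv_base (m : ℕ) {t : ℝ} (ht : (0:ℝ) ≤ t) :
    HasDerivAt (fun t : ℝ => -(((m:ℝ)+1)⁻¹ * ((1+t)^(m+1))⁻¹)) (((1+t)^(m+2))⁻¹) t := by
  have h1 : (0:ℝ) < 1 + t := by linarith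
  have hp : HasDerivAt (fun t : ℝ => (1+t)^(m+1)) ((m+1 : ℝ) * (1+t)^m) t := by
    have := ((hasDerivAt_id t).const_add 1).pow (m+1)
    simpa [Pi.pow_def] using this
  have h := ((hp.inv (by positivity)).const_mul (((m:ℝ)+1)⁻¹)).neg
  refine h.congr_deriv ?_
  field_simp
  ring

lemma base_integrable (m : ℕ) :
    IntegrableOn (fun t : ℝ => ((1+t)^(m+2))⁻¹) (Ioi (0:ℝ)) := by
  apply integrableOn_Ioi_deriv_of_nonneg' (fun t ht => aux_deriv_base m ht.out)
    (fun t ht => inv_nonneg.mpr (pow_nonneg (by linarith [ht.out]) _)) (tendsto_base m)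

lemma pow_div_integrable (m k : ℕ) :
    IntegrableOn (fun t : ℝ => t^k / (1+t)^(m+2+k)) (Ioi (0:ℝ)) := by
  apply Integrable.mono (base_integrable m)
  · apply ContinuousOn.aestronglyMeasurable _ measurableSet_Ioi
    apply ContinuousOn.div (by fun_prop) (by fun_prop)
    intro t ht
    have := ht.out
    positivity
  · rw [ae_restrict_iff' measurableSet_Ioi]
    filter_upwards with t ht
    have ht0 : (0:ℝ) < t := ht.out
    have h1 : (0:ℝ) < 1 + t := by linarith
    rw [Real.norm_eq_abs, Real.norm_eq_abs, abs_of_nonneg (by positivity),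
      abs_of_nonneg (by positivity)]
    calc t^k/(1+t)^(m+2+k) ≤ (1+t)^k/(1+t)^(m+2+k) := by
          gcongr
          linarith
      _ = ((1+t)^(m+2))⁻¹ := by
          rw [pow_add]
          field_simp

lemma aux_deriv_step (m k : ℕ) {t : ℝ} (ht : (0:ℝ) ≤ t) :
    HasDerivAt (fun t : ℝ => -(t^(k+1) / (((m:ℝ)+2+k) * (1+t)^(m+2+k))))
      (t^(k+1)/(1+t)^(m+2+(k+1)) - (((k:ℝ)+1)/((m:ℝ)+2+k)) * (t^k/(1+t)^(m+2+k))) t := by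
  have h1 : (0:ℝ) < 1 + t := by linarith
  have hc : ((m:ℝ)+2+k) ≠ 0 := by positivity
  have hu : HasDerivAt (fun t : ℝ => t^(k+1)) (((k:ℝ)+1) * t^k) t := by
    simpa using hasDerivAt_pow (k+1) t
  have hv : HasDerivAt (fun t : ℝ => ((m:ℝ)+2+k) * (1+t)^(m+2+k))
      (((m:ℝ)+2+k) * (((m:ℝ)+2+k) * (1+t)^(m+1+k))) t := by
    have hp : HasDerivAt (fun t : ℝ => (1+t)^(m+2+k)) (((m:ℝ)+2+k) * (1+t)^(m+1+k)) t := by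
      have h0 := ((hasDerivAt_id t).const_add 1).pow (m+2+k)
      have e : m + 2 + k - 1 = m + 1 + k := by omega
      rw [e] at h0
      push_cast at h0
      simpa [Pi.pow_def] using h0
    exact hp.const_mul _
  have h := (hu.div hv (by positivity)).neg
  refine h.congr_deriv ?_
  field_simp
  ring

lemma tendsto_step (m k : ℕ) :
    Tendsto (fun t : ℝ => -(t^(k+1) / (((m:ℝ)+2+k) * (1+t)^(m+2+k)))) atTop (𝓝 0) := by
  have hc : (0:ℝ) < ((m:ℝ)+2+k) := by positivity
  have hb : Tendsto (fun t : ℝ => ((1+t)^(m+1))⁻¹ / ((m:ℝ)+2+k)) atTop (𝓝 0) := by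
    simpa using ((one_add_tendsto m).inv_tendsto_atTop).div_const ((m:ℝ)+2+k)
  have h := squeeze_zero' (g := fun t : ℝ => ((1+t)^(m+1))⁻¹ / ((m:ℝ)+2+k))
    (f := fun t : ℝ => t^(k+1) / (((m:ℝ)+2+k) * (1+t)^(m+2+k)))
    ?_ ?_ hb
  · simpa using h.neg
  · filter_upwards [eventually_ge_atTop (0:ℝ)] with t ht
    have h1 : (0:ℝ) < 1 + t := by linarith
    positivity
  · filter_upwards [eventually_ge_atTop (0:ℝ)] with t ht
    have h1 : (0:ℝ) < 1 + t := by linarith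
    rw [div_le_div_iff₀ (by positivity) (by positivity)]
    have h2 : t^(k+1) ≤ (1+t)^(k+1) := pow_le_pow_left₀ ht (by linarith) _
    calc t^(k+1) * ((m:ℝ)+2+k) ≤ (1+t)^(k+1) * ((m:ℝ)+2+k) := by
          have : (0:ℝ) < ((m:ℝ)+2+k) := by positivity
          nlinarith
      _ = ((1+t)^(m+1))⁻¹ * (((m:ℝ)+2+k) * (1+t)^(m+2+k)) := by
          rw [show m+2+k = (k+1)+(m+1) by omega, pow_add]
          field_simp
          ring

lemma pow_div_integral (m : ℕ) : ∀ k : ℕ,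
    (((m:ℝ)+1) * ((m+1+k).choose k : ℝ)) * ∫ t in Ioi (0:ℝ), t^k/(1+t)^(m+2+k) = 1 := by
  intro k
  induction k with
  | zero =>
    have key : ∫ t in Ioi (0:ℝ), ((1+t)^(m+2))⁻¹ = ((m:ℝ)+1)⁻¹ := by
      have h := integral_Ioi_of_hasDerivAt_of_tendsto'
        (f' := fun t : ℝ => ((1+t)^(m+2))⁻¹)
        (fun t ht => aux_deriv_base m ht.out) (base_integrable m) (tendsto_base m)
      simpa using h
    have e : ∫ t in Ioi (0:ℝ), t^0/(1+t)^(m+2+0) = ∫ t in Ioi (0:ℝ), ((1+t)^(m+2))⁻¹ := by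
      apply setIntegral_congr_fun measurableSet_Ioi
      intro t ht
      simp [one_div]
    rw [e, key]
    simp
    field_simp
  | succ k ih =>
    set c : ℝ := (m:ℝ)+2+k with hcdef
    have hc : (0:ℝ) < c := by positivity
    have hsub : IntegrableOn (fun t : ℝ =>
        t^(k+1)/(1+t)^(m+2+(k+1)) - (((k:ℝ)+1)/c) * (t^k/(1+t)^(m+2+k))) (Ioi (0:ℝ)) :=
      (pow_div_integrable m (k+1)).sub ((pow_div_integrable m k).const_mul _)
    have key := integral_Ioi_of_hasDerivAt_of_tendsto'
      (fun t ht => aux_deriv_step m k ht.out) hsub (tendsto_step m k)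
    simp only [ne_eq, zero_pow, Nat.succ_ne_zero, not_false_iff, zero_div, neg_zero, sub_zero,
      add_zero, zero_sub] at key
    rw [integral_sub (pow_div_integrable m (k+1)) ((pow_div_integrable m k).const_mul _),
      sub_eq_zero] at key
    rw [integral_const_mul] at key
    have hnat : (((m+1+k+1) * ((m+1+k).choose k) : ℕ) : ℝ)
        = (((m+1+(k+1)).choose (k+1) * (k+1) : ℕ) : ℝ) := by
      congr 1
      have := Nat.add_one_mul_choose_eq (m+1+k) k
      simpa [Nat.succ_eq_add_one, ← add_assoc] using this
    push_cast at hnat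
    set I : ℝ := ∫ t in Ioi (0:ℝ), t^k/(1+t)^(m+2+k) with hI
    rw [key]
    have hcI : ((m:ℝ)+1+k+1) = c := by rw [hcdef]; ring
    rw [hcI] at hnat
    field_simp
    linear_combination (-((m:ℝ)+1) * I) * hnat + c * ih

lemma bask_eq (m k : ℕ) : bask (m+2) k = fun t : ℝ =>
    (((m+1+k).choose k : ℝ)) * (t^k / (1+t)^(m+2+k)) := by
  funext t
  have e : m + 2 + k - 1 = m + 1 + k := by omega
  rw [bask, e, mul_div_assoc]

lemma bask_integrableOn {n : ℕ} (hn : 2 ≤ n) (k : ℕ) :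
    IntegrableOn (fun t : ℝ => bask n k t) (Ioi (0:ℝ)) := by
  obtain ⟨m, rfl⟩ : ∃ m, n = m + 2 := ⟨n - 2, by omega⟩
  rw [bask_eq]
  exact (pow_div_integrable m k).const_mul _

lemma bask_integral {n : ℕ} (hn : 2 ≤ n) (k : ℕ) :
    ∫ t in Ioi (0:ℝ), bask n k t = ((n:ℝ) - 1)⁻¹ := by
  obtain ⟨m, rfl⟩ : ∃ m, n = m + 2 := ⟨n - 2, by omega⟩
  rw [bask_eq]
  rw [integral_const_mul]
  have h := pow_div_integral m k
  have hm : ((m:ℝ)+1) ≠ 0 := by positivity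
  have e : ((m+2 : ℕ):ℝ) - 1 = (m:ℝ) + 1 := by push_cast; ring
  rw [e]
  rw [mul_assoc] at h
  field_simp
  linarith [h]

lemma bask_nonneg {n k : ℕ} {x : ℝ} (hx : 0 ≤ x) : 0 ≤ bask n k x := by
  have : (0:ℝ) ≤ 1 + x := by linarith
  rw [bask]
  positivity

lemma hasSum_bask {x : ℝ} (hx : 0 ≤ x) (j : ℕ) :
    HasSum (fun k : ℕ => bask (j+1) k x) 1 := by
  have h1 : (0:ℝ) < 1 + x := by linarith
  set r : ℝ := x / (1+x) with hr
  have hrlt : ‖r‖ < 1 := by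
    rw [Real.norm_eq_abs, abs_of_nonneg (by positivity), hr, div_lt_one h1]
    linarith
  have h := (hasSum_choose_mul_geometric_of_norm_lt_one (𝕜 := ℝ) j hrlt).mul_left
    (((1+x)^(j+1))⁻¹)
  have hval : ((1+x)^(j+1))⁻¹ * (1 / (1 - r) ^ (j+1)) = 1 := by
    have : 1 - r = (1+x)⁻¹ := by rw [hr]; field_simp; ring
    rw [this, inv_pow, one_div, inv_inv]
    field_simp
  rw [hval] at h
  refine HasSum.congr_fun h ?_
  intro k
  rw [bask]
  have e : j + 1 + k - 1 = k + j := by omega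
  rw [e, Nat.choose_symm_add]
  rw [hr, div_pow, pow_add]
  field_simp

lemma hasSum_bask_shift {x : ℝ} (hx : 0 ≤ x) (j : ℕ) :
    HasSum (fun k : ℕ => if k = 0 then 0 else bask (j+1) (k-1) x) 1 := by
  have h := hasSum_bask hx j
  have h2 : HasSum (fun k : ℕ =>
      (fun k : ℕ => if k = 0 then 0 else bask (j+1) (k-1) x) (k + 1)) 1 := by
    refine HasSum.congr_fun h ?_
    intro k
    simp
  refine (hasSum_nat_add_iff'
    (f := fun k : ℕ => if k = 0 then 0 else bask (j+1) (k-1) x) (g := 1) 1).mp ?_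
  simpa using h2

lemma hasSum_p1 (a0 a1 : ℕ → ℝ) (n : ℕ) {x : ℝ} (hx : 0 ≤ x) :
    HasSum (fun k : ℕ => p1 a0 a1 n k x) (2 * a0 n - a1 n) := by
  have h1 := (hasSum_bask hx n).mul_left (a0 n + a1 n * x)
  have h2 := (hasSum_bask_shift hx n).mul_left (a0 n - a1 n * (1 + x))
  have h := h1.add h2
  simp only [mul_one] at h
  rw [show 2 * a0 n - a1 n = a0 n + a1 n * x + (a0 n - a1 n * (1 + x)) by ring]
  exact h

lemma summable_p1_abs (a0 a1 : ℕ → ℝ) (n : ℕ) {x : ℝ} (hx : 0 ≤ x) (c : ℝ) :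
    Summable (fun k : ℕ => |p1 a0 a1 n k x * c|) := by
  refine Summable.of_nonneg_of_le
    (f := fun k : ℕ => (|a0 n + a1 n * x| * bask (n+1) k x
      + |a0 n - a1 n * (1 + x)| * (if k = 0 then 0 else bask (n+1) (k-1) x)) * |c|)
    (fun k => abs_nonneg _) ?_ ?_
  · intro k
    rw [abs_mul, p1]
    apply mul_le_mul_of_nonneg_right _ (abs_nonneg c)
    refine (abs_add_le _ _).trans ?_
    rw [abs_mul, abs_mul]
    gcongr
    · rw [abs_of_nonneg (bask_nonneg hx)]
    · split
      · simp
      · rw [abs_of_nonneg (bask_nonneg hx)]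
  · apply Summable.mul_right
    exact ((hasSum_bask hx n).summable.mul_left _).add
      ((hasSum_bask_shift hx n).summable.mul_left _)

end Aux

/-- First-order modified Baskakov–Durrmeyer operator. -/
noncomputable def V1 (a0 a1 : ℕ → ℝ) (n : ℕ) (f : ℝ → ℝ) (x : ℝ) : ℝ :=
  ((n : ℝ) - 1) * ∑' k : ℕ, p1 a0 a1 n k x * ∫ t in Set.Ioi (0 : ℝ), bask n k t * f t

theorem V1_moment_e0 (n : ℕ) (hn : 2 ≤ n) (x : ℝ) (hx : 0 ≤ x) (a0 a1 : ℕ → ℝ) :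
    (∀ k : ℕ, IntegrableOn (fun t : ℝ => bask n k t * (1 : ℝ)) (Set.Ioi 0)) ∧
    Summable (fun k : ℕ =>
      |p1 a0 a1 n k x * ∫ t in Set.Ioi (0 : ℝ), bask n k t * (1 : ℝ)|) ∧
    V1 a0 a1 n (fun _ => (1 : ℝ)) x = 2 * a0 n - a1 n := by
  have hne : ((n:ℝ) - 1) ≠ 0 := by
    have : (2:ℝ) ≤ (n:ℝ) := by exact_mod_cast hn
    linarith
  have hint : ∀ k : ℕ, (∫ t in Set.Ioi (0:ℝ), bask n k t * (1:ℝ)) = ((n:ℝ)-1)⁻¹ := by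
    intro k
    simp only [mul_one]
    exact bask_integral hn k
  refine ⟨fun k => ?_, ?_, ?_⟩
  · simpa [mul_one] using bask_integrableOn hn k
  · apply Summable.congr (summable_p1_abs a0 a1 n hx (((n:ℝ)-1)⁻¹))
    intro k
    rw [hint k]
  · rw [V1]
    simp only [mul_one]
    rw [tsum_congr (fun k => by rw [bask_integral hn k] :
      ∀ k : ℕ, p1 a0 a1 n k x * (∫ t in Set.Ioi (0:ℝ), bask n k t)
        = p1 a0 a1 n k x * ((n:ℝ)-1)⁻¹),
      tsum_mul_right, (hasSum_p1 a0 a1 n hx).tsum_eq]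
    field_simp
end

section
/- Let n ≥ 5 be an integer, x ≥ 0 a real number, and a_0(n), a_1(n) real sequences. Then V_{n,1}(e_3; x) = (2a_0(n) − a_1(n))x³ + (1/((n−2)(n−3)(n−4)))·[a_0(n)(30+54x+42x²+60x³) + a_1(n)(−24−54x−42x²−36x³) + n{a_0(n)(54x+63x²−30x³) + a_1(n)(−36x−54x²+6x³)} + n²{a_0(n)(21x²+30x³) + a_1(n)(−12x²−18x³)}], where e_3(t) = t³ (in particular the defining series and integrals converge absolutely). -/
open MeasureTheory Filter Topology

section Aux
open Set
variable {x : ℝ}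


lemma deriv_invpow (b : ℕ) (t : ℝ) (ht : (0:ℝ) < 1 + t) :
    HasDerivAt (fun s : ℝ => ((1 + s) ^ (b+1))⁻¹)
      (-((b:ℝ)+1) / (1 + t) ^ (b+2)) t := by
  have h1 : HasDerivAt (fun s : ℝ => (1 + s)) 1 t := (hasDerivAt_id t).const_add 1
  have h2 : HasDerivAt (fun s : ℝ => (1 + s) ^ (b+1))
      (((b:ℝ)+1) * (1 + t) ^ b * 1) t := by
    simpa using (h1.fun_pow (b+1))
  have h3 := h2.fun_inv (by positivity)
  convert h3 using 1
  · rfl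
  · rfl
  field_simp
  ring

lemma tends_zero (a b : ℕ) (h : a + 1 ≤ b) :
    Tendsto (fun t : ℝ => t ^ a / (1 + t) ^ b) atTop (𝓝 0) := by
  have hb : Tendsto (fun t : ℝ => ((1 + t))⁻¹) atTop (𝓝 0) :=
    tendsto_inv_atTop_zero.comp (tendsto_atTop_add_const_left _ 1 tendsto_id)
  refine squeeze_zero' ?_ ?_ hb
  · filter_upwards [eventually_ge_atTop (0:ℝ)] with t ht
    positivity
  · filter_upwards [eventually_ge_atTop (0:ℝ)] with t ht
    have h1 : (0:ℝ) < 1 + t := by linarith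
    have h1' : (1:ℝ) ≤ 1 + t := by linarith
    have hsplit : (1+t) ^ b = (1+t) ^ (b-1) * (1+t) := by
      rw [← pow_succ]; congr 1; omega
    rw [div_le_iff₀ (by positivity)]
    calc t ^ a ≤ (1+t) ^ a := pow_le_pow_left₀ ht (by linarith) a
      _ ≤ (1+t) ^ (b-1) := pow_le_pow_right₀ h1' (by omega)
      _ = (1+t)⁻¹ * (1+t)^b := by rw [hsplit]; field_simp
    
lemma integ_base : IntegrableOn (fun t : ℝ => ((1 + t) ^ 2)⁻¹) (Ioi (0:ℝ)) := by
  refine integrableOn_Ioi_deriv_of_nonneg' (g := fun t : ℝ => -((1+t)^1)⁻¹)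
    (l := 0) (fun t ht => ?_) (fun t ht => by positivity) ?_
  · have ht' : (0:ℝ) < 1 + t := by simp at ht; linarith
    have := (deriv_invpow 0 t ht').fun_neg
    simpa [neg_div] using this
  · have hb : Tendsto (fun t : ℝ => ((1 + t))⁻¹) atTop (𝓝 0) :=
      tendsto_inv_atTop_zero.comp (tendsto_atTop_add_const_left _ 1 tendsto_id)
    simpa using hb.neg

lemma integ_pow (a b : ℕ) (h : a + 2 ≤ b) :
    IntegrableOn (fun t : ℝ => t ^ a / (1 + t) ^ b) (Ioi (0:ℝ)) := by
  refine Integrable.mono' integ_base ?_ ?_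
  · refine (ContinuousOn.aestronglyMeasurable ?_ measurableSet_Ioi)
    exact ContinuousOn.div (by fun_prop) (by fun_prop)
      (fun t ht => by have : (0:ℝ) < t := ht; positivity)
  · filter_upwards [ae_restrict_mem measurableSet_Ioi] with t ht
    have ht0 : (0:ℝ) < t := ht
    have h1 : (0:ℝ) < 1 + t := by linarith
    have h1' : (1:ℝ) ≤ 1 + t := by linarith
    rw [Real.norm_eq_abs, abs_of_nonneg (by positivity)]
    rw [div_le_iff₀ (by positivity)]
    calc t ^ a ≤ (1+t) ^ a := pow_le_pow_left₀ ht0.le (by linarith) a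
      _ ≤ (1+t) ^ (b-2) := pow_le_pow_right₀ h1' (by omega)
      _ = ((1+t)^2)⁻¹ * (1+t)^b := by
          rw [inv_mul_eq_div, eq_div_iff (by positivity), ← pow_add]
          congr 1; omega



lemma deriv_invpow' (b : ℕ) (hb : 1 ≤ b) (t : ℝ) (ht : (0:ℝ) < 1 + t) :
    HasDerivAt (fun s : ℝ => ((1 + s) ^ b)⁻¹) (-(b:ℝ) / (1 + t) ^ (b+1)) t := by
  obtain ⟨b', rfl⟩ : ∃ b', b = b' + 1 := ⟨b - 1, by omega⟩
  have h := deriv_invpow b' t ht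
  have he : (-(((b'+1:ℕ)):ℝ)) / (1 + t) ^ (b'+1+1) = -((b':ℝ)+1) / (1+t) ^ (b'+2) := by
    push_cast; ring_nf
  rw [he]
  exact h

lemma step_int (a M : ℕ) (hM : a + 2 ≤ M) :
    ∫ t in Ioi (0:ℝ), t ^ (a+1) / (1+t) ^ (M+1)
      = ((a:ℝ)+1)/(M:ℝ) * ∫ t in Ioi (0:ℝ), t ^ a / (1+t) ^ M := by
  have hMpos : (0:ℝ) < (M:ℝ) := by
    have : 0 < M := by omega
    exact_mod_cast this
  have i1 : IntegrableOn (fun t : ℝ => t ^ (a+1) / (1+t) ^ (M+1)) (Ioi 0) :=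
    integ_pow (a+1) (M+1) (by omega)
  have i2 : IntegrableOn (fun t : ℝ => t ^ a / (1+t) ^ M) (Ioi 0) :=
    integ_pow a M (by omega)
  have key : ∫ t in Ioi (0:ℝ),
      ((M:ℝ) * (t ^ (a+1) / (1+t) ^ (M+1)) - ((a:ℝ)+1) * (t ^ a / (1+t) ^ M))
      = 0 - (-((0:ℝ)^(a+1) * ((1+(0:ℝ))^M)⁻¹)) := by
    refine integral_Ioi_of_hasDerivAt_of_tendsto'
      (f := fun t : ℝ => -(t ^ (a+1) * ((1+t)^M)⁻¹)) (fun t ht => ?_) ?_ ?_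
    · have ht' : (0:ℝ) < 1 + t := by have : (0:ℝ) ≤ t := ht; linarith
      have h1 : HasDerivAt (fun s : ℝ => s ^ (a+1)) (((a:ℝ)+1) * t ^ a) t := by
        simpa using hasDerivAt_pow (a+1) t
      have h2 := deriv_invpow' M (by omega) t ht'
      have h3 := (h1.fun_mul h2).fun_neg
      convert h3 using 1
      rw [div_eq_mul_inv, div_eq_mul_inv, div_eq_mul_inv]
      ring
    · exact (i1.const_mul _).sub (i2.const_mul _)
    · have := ((tends_zero (a+1) M (by omega))).neg
      simp only [neg_zero] at this
      convert this using 2 with t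
      rw [div_eq_mul_inv]
  rw [integral_sub (i1.const_mul _) (i2.const_mul _),
    integral_const_mul, integral_const_mul] at key
  norm_num at key
  rw [eq_comm, div_mul_eq_mul_div, div_eq_iff hMpos.ne']
  linarith [key]

lemma intJ (a c : ℕ) : ∫ t in Ioi (0:ℝ), t ^ a / (1 + t) ^ (a + 2 + c)
    = (a.factorial * c.factorial : ℝ) / (a + c + 1).factorial := by
  induction a with
  | zero =>
      have hval : ∫ t in Ioi (0:ℝ), t ^ 0 / (1 + t) ^ (0 + 2 + c)
          = 0 - (-((1+(0:ℝ))^(c+1))⁻¹/((c:ℝ)+1)) := by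
        refine integral_Ioi_of_hasDerivAt_of_nonneg'
          (g := fun t : ℝ => -((1+t)^(c+1))⁻¹/((c:ℝ)+1)) (fun t ht => ?_) (fun t ht => ?_) (l := 0) ?_
        · have ht' : (0:ℝ) < 1 + t := by have : (0:ℝ) ≤ t := ht; linarith
          have := ((deriv_invpow c t ht').fun_neg).div_const ((c:ℝ)+1)
          convert this using 1
          · rfl
          · rfl
          have h2 : ((1+t) ^ (c+2) : ℝ) ≠ 0 := by positivity
          have h3 : ((c:ℝ)+1) ≠ 0 := by positivity
          rw [show 0+2+c = c+2 by omega]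
          field_simp
        · have ht' : (0:ℝ) < t := ht
          positivity
        · have hb := tends_zero 0 (c+1) (by omega)
          have := (hb.div_const ((c:ℝ)+1)).neg
          simp only [pow_zero] at this
          have h0 : -((0:ℝ)/((c:ℝ)+1)) = 0 := by norm_num
          rw [h0] at this
          convert this using 2 with t
          ring
      rw [hval]
      have hfs : ((c+1).factorial : ℝ) = ((c:ℝ)+1) * c.factorial := by
        rw [Nat.factorial_succ]; push_cast; ring
      have hc : ((c:ℝ)+1) ≠ 0 := by positivity
      have hcf : (c.factorial : ℝ) ≠ 0 := by positivity
      simp only [Nat.factorial_zero, Nat.zero_add, Nat.cast_one, hfs]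
      field_simp
      simp
  | succ a ih =>
      have hexp : a + 1 + 2 + c = (a + 2 + c) + 1 := by omega
      rw [hexp, step_int a (a+2+c) (by omega), ih]
      have h1 : ((a+1).factorial : ℝ) = ((a:ℝ)+1) * a.factorial := by
        rw [Nat.factorial_succ]; push_cast; ring
      have h2 : a + 1 + c + 1 = (a + c + 1) + 1 := by omega
      have h3 : (((a+c+1)+1).factorial : ℝ) = ((a:ℝ)+(c:ℝ)+2) * (a+c+1).factorial := by
        rw [Nat.factorial_succ]; push_cast; ring
      rw [h1, h2, h3]
      have hM : ((a:ℝ)+2+(c:ℝ)) ≠ 0 := by positivity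
      have hd : (((a+c+1).factorial :ℕ):ℝ) ≠ 0 := by positivity
      have hd2 : ((a:ℝ)+(c:ℝ)+2) ≠ 0 := by positivity
      push_cast
      field_simp
      ring

lemma bask_eq_s3 (M k : ℕ) (hx : 0 ≤ x) :
    bask (M+1) k x = ((k+M).choose M : ℝ) * (x/(1+x))^k * ((1+x)^(M+1))⁻¹ := by
  have h1 : (0:ℝ) < 1 + x := by linarith
  unfold bask
  rw [show M+1+k-1 = k+M by omega, Nat.choose_symm_add, div_pow,
    show M+1+k = k+(M+1) by omega, pow_add, div_eq_mul_inv, div_eq_mul_inv, mul_inv]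
  ring

lemma bask_hasSum (M : ℕ) (hx : 0 ≤ x) : HasSum (fun k => bask (M+1) k x) 1 := by
  have h1 : (0:ℝ) < 1 + x := by linarith
  have hr : ‖x/(1+x)‖ < 1 := by
    rw [Real.norm_eq_abs, abs_of_nonneg (by positivity)]
    rw [div_lt_one h1]; linarith
  have h := (hasSum_choose_mul_geometric_of_norm_lt_one M hr).mul_right ((1+x)^(M+1))⁻¹
  have he : (fun k => (((k+M).choose M : ℝ)) * (x/(1+x))^k * ((1+x)^(M+1))⁻¹)
      = fun k => bask (M+1) k x := funext fun k => (bask_eq_s3 M k hx).symm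
  rw [he] at h
  convert h using 1
  · rfl
  have h2 : (1 - x/(1+x)) = (1+x)⁻¹ := by field_simp; ring
  rw [h2, one_div, inv_pow, inv_inv, mul_inv_cancel₀ (by positivity)]

lemma bask_step (N k : ℕ) (hx : 0 ≤ x) :
    bask (N+1) (k+1) x * ((k:ℝ)+1) = ((N:ℝ)+1) * x * bask (N+2) k x := by
  have h1 : (0:ℝ) < 1 + x := by linarith
  have hc : ((N+k+1).choose (k+1) : ℝ) * ((k:ℝ)+1) = ((N+k+1).choose k : ℝ) * ((N:ℝ)+1) := by
    have := Nat.choose_succ_right_eq (N+k+1) k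
    have h2 : N+k+1-k = N+1 := by omega
    rw [h2] at this
    exact_mod_cast congrArg (Nat.cast : ℕ → ℝ) this
  unfold bask
  rw [show N+1+(k+1)-1 = N+k+1 by omega, show N+2+k-1 = N+k+1 by omega,
    show N+1+(k+1) = N+k+2 by omega, show N+2+k = N+k+2 by omega]
  rw [div_eq_mul_inv, div_eq_mul_inv]
  linear_combination x^(k+1) * ((1+x)^(N+k+2))⁻¹ * hc

lemma bask_hasSum1 (M : ℕ) (hx : 0 ≤ x) :
    HasSum (fun k => bask (M+1) k x * (k:ℝ)) (((M:ℝ)+1) * x) := by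
  have h := (bask_hasSum (M+1) hx).mul_left (((M:ℝ)+1) * x)
  have he : (fun k => (((M:ℝ)+1) * x) * bask (M+2) k x)
      = fun n => bask (M+1) (n+1) x * ((n:ℝ)+1) := by
    funext n
    rw [bask_step M n hx]
  rw [he, mul_one] at h
  have h2 := (hasSum_nat_add_iff (f := fun k => bask (M+1) k x * (k:ℝ)) 1).mp
    (by convert h using 2 with n; rfl; all_goals (push_cast; ring))
  simpa using h2

lemma bask_hasSum2 (M : ℕ) (hx : 0 ≤ x) :
    HasSum (fun k => bask (M+1) k x * ((k:ℝ) * ((k:ℝ)-1)))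
      (((M:ℝ)+1) * ((M:ℝ)+2) * x^2) := by
  have h := (bask_hasSum1 (M+1) hx).mul_left (((M:ℝ)+1) * x)
  have he : (fun k => (((M:ℝ)+1) * x) * (bask (M+2) k x * (k:ℝ)))
      = fun n => bask (M+1) (n+1) x * (((n:ℝ)+1) * (((n:ℝ)+1)-1)) := by
    funext n
    have hs := bask_step M n hx
    linear_combination (-(n:ℝ)) * hs
  rw [he] at h
  have h2 := (hasSum_nat_add_iff (f := fun k => bask (M+1) k x * ((k:ℝ)*((k:ℝ)-1))) 1).mp
    (by convert h using 2 with n; rfl; all_goals (push_cast; ring))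
  simp only [Finset.range_one, Finset.sum_singleton, Nat.cast_zero] at h2
  convert h2 using 1
  · rfl
  push_cast
  ring

lemma bask_hasSum3 (M : ℕ) (hx : 0 ≤ x) :
    HasSum (fun k => bask (M+1) k x * ((k:ℝ) * ((k:ℝ)-1) * ((k:ℝ)-2)))
      (((M:ℝ)+1) * ((M:ℝ)+2) * ((M:ℝ)+3) * x^3) := by
  have h := (bask_hasSum2 (M+1) hx).mul_left (((M:ℝ)+1) * x)
  have he : (fun k => (((M:ℝ)+1) * x) * (bask (M+2) k x * ((k:ℝ)*((k:ℝ)-1))))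
      = fun n => bask (M+1) (n+1) x * (((n:ℝ)+1) * (((n:ℝ)+1)-1) * (((n:ℝ)+1)-2)) := by
    funext n
    have hs := bask_step M n hx
    linear_combination (-((n:ℝ) * ((n:ℝ)-1))) * hs
  rw [he] at h
  have h2 := (hasSum_nat_add_iff
      (f := fun k => bask (M+1) k x * ((k:ℝ)*((k:ℝ)-1)*((k:ℝ)-2))) 1).mp
    (by convert h using 2 with n; rfl; all_goals (push_cast; ring))
  simp only [Finset.range_one, Finset.sum_singleton, Nat.cast_zero] at h2
  convert h2 using 1
  · rfl
  push_cast
  ring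

lemma coeff_id (m k : ℕ) :
    ((m+k+4).choose k : ℝ) * (((k+3).factorial * m.factorial : ℝ) / ((m+k+4).factorial))
      = (((k:ℝ)+1)*((k:ℝ)+2)*((k:ℝ)+3)) / (((m:ℝ)+1)*((m:ℝ)+2)*((m:ℝ)+3)*((m:ℝ)+4)) := by
  have hk3 : (((k+3).factorial : ℕ) : ℝ) = ((k:ℝ)+3)*((k:ℝ)+2)*((k:ℝ)+1)*k.factorial := by
    rw [show k+3 = (k+2)+1 by omega, Nat.factorial_succ,
      show k+2 = (k+1)+1 by omega, Nat.factorial_succ, Nat.factorial_succ]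
    push_cast; ring
  have hm4 : (((m+4).factorial : ℕ) : ℝ)
      = ((m:ℝ)+4)*((m:ℝ)+3)*((m:ℝ)+2)*((m:ℝ)+1)*m.factorial := by
    rw [show m+4 = (m+3)+1 by omega, Nat.factorial_succ, show m+3 = (m+2)+1 by omega,
      Nat.factorial_succ, show m+2 = (m+1)+1 by omega, Nat.factorial_succ, Nat.factorial_succ]
    push_cast; ring
  have key : (((m+k+4).factorial : ℕ) : ℝ)
      = ((m+k+4).choose k : ℝ) * k.factorial *
        (((m:ℝ)+4)*((m:ℝ)+3)*((m:ℝ)+2)*((m:ℝ)+1)*m.factorial) := by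
    have h := Nat.choose_mul_factorial_mul_factorial (show k ≤ m+k+4 by omega)
    rw [show m+k+4-k = m+4 by omega] at h
    have h' : ((m+k+4).choose k : ℝ) * k.factorial * (m+4).factorial
        = ((m+k+4).factorial : ℕ) := by exact_mod_cast congrArg (Nat.cast : ℕ → ℝ) h
    rw [← h', hm4]
  have hfac : (0:ℝ) < ((m+k+4).factorial : ℕ) := by exact_mod_cast (m+k+4).factorial_pos
  have hden : (0:ℝ) < ((m:ℝ)+1)*((m:ℝ)+2)*((m:ℝ)+3)*((m:ℝ)+4) := by positivity
  have hkf : (0:ℝ) < (k.factorial : ℕ) := by exact_mod_cast k.factorial_pos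
  have hmf : (0:ℝ) < (m.factorial : ℕ) := by exact_mod_cast m.factorial_pos
  rw [mul_div_assoc', div_eq_div_iff hfac.ne' hden.ne', key, hk3]
  ring


lemma final_alg (μ A0 A1 X : ℝ) (h1 : μ+1 ≠ 0) (h2 : μ+2 ≠ 0) (h3 : μ+3 ≠ 0) (h4 : μ+4 ≠ 0) :
    (μ+5-1) * ((A0 + A1*X) * ((μ+6)*(μ+7)*(μ+8)*X^3 + 9*((μ+6)*(μ+7))*X^2 + 18*(μ+6)*X + 6)
        / ((μ+1)*(μ+2)*(μ+3)*(μ+4))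
      + (A0 - A1*(1+X)) * ((μ+6)*(μ+7)*(μ+8)*X^3 + 12*((μ+6)*(μ+7))*X^2 + 36*(μ+6)*X + 24)
        / ((μ+1)*(μ+2)*(μ+3)*(μ+4)))
    = (2*A0 - A1)*X^3 + (1/((μ+5-2)*(μ+5-3)*(μ+5-4)))
        * (A0*(30+54*X+42*X^2+60*X^3) + A1*(-24-54*X-42*X^2-36*X^3)
          + (μ+5)*(A0*(54*X+63*X^2-30*X^3) + A1*(-36*X-54*X^2+6*X^3))
          + (μ+5)^2*(A0*(21*X^2+30*X^3) + A1*(-12*X^2-18*X^3))) := by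
  rw [show μ+5-2 = μ+3 by ring, show μ+5-3 = μ+2 by ring, show μ+5-4 = μ+1 by ring,
    show μ+5-1 = μ+4 by ring]
  field_simp
  ring

end Aux

theorem V1_moment_e3 (n : ℕ) (hn : 5 ≤ n) (x : ℝ) (hx : 0 ≤ x) (a0 a1 : ℕ → ℝ) :
    (∀ k : ℕ, IntegrableOn (fun t : ℝ => bask n k t * t ^ 3) (Set.Ioi 0)) ∧
    Summable (fun k : ℕ =>
      |p1 a0 a1 n k x * ∫ t in Set.Ioi (0 : ℝ), bask n k t * t ^ 3|) ∧
    V1 a0 a1 n (fun t => t ^ 3) x =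
      (2 * a0 n - a1 n) * x ^ 3 + (1 / (((n : ℝ) - 2) * ((n : ℝ) - 3) * ((n : ℝ) - 4))) *
        (a0 n * (30 + 54 * x + 42 * x ^ 2 + 60 * x ^ 3)
          + a1 n * (-24 - 54 * x - 42 * x ^ 2 - 36 * x ^ 3)
          + (n : ℝ) * (a0 n * (54 * x + 63 * x ^ 2 - 30 * x ^ 3)
              + a1 n * (-36 * x - 54 * x ^ 2 + 6 * x ^ 3))
          + (n : ℝ) ^ 2 * (a0 n * (21 * x ^ 2 + 30 * x ^ 3)
              + a1 n * (-12 * x ^ 2 - 18 * x ^ 3))) := by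
  obtain ⟨m, rfl⟩ : ∃ m, n = m + 5 := ⟨n - 5, by omega⟩
  have h1x : (0:ℝ) < 1 + x := by linarith
  -- Integrability
  have hint : ∀ k : ℕ, IntegrableOn (fun t : ℝ => bask (m+5) k t * t ^ 3) (Set.Ioi 0) := by
    intro k
    have heq : (fun t : ℝ => bask (m+5) k t * t ^ 3)
        = fun t => ((m+5+k-1).choose k : ℝ) * (t ^ (k+3) / (1+t) ^ (m+5+k)) := by
      funext t; unfold bask; rw [pow_add]; ring
    rw [heq]
    exact (integ_pow (k+3) (m+5+k) (by omega)).const_mul _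
  -- Integral values
  have hIval : ∀ k : ℕ, (∫ t in Set.Ioi (0:ℝ), bask (m+5) k t * t ^ 3)
      = (((k:ℝ)+1)*((k:ℝ)+2)*((k:ℝ)+3)) / (((m:ℝ)+1)*((m:ℝ)+2)*((m:ℝ)+3)*((m:ℝ)+4)) := by
    intro k
    have heq : (fun t : ℝ => bask (m+5) k t * t ^ 3)
        = fun t => ((m+k+4).choose k : ℝ) * (t ^ (k+3) / (1+t) ^ ((k+3)+2+m)) := by
      funext t; unfold bask
      rw [show m+5+k-1 = m+k+4 by omega, show (k+3)+2+m = m+5+k by omega, pow_add]; ring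
    rw [heq, MeasureTheory.integral_const_mul, intJ (k+3) m,
      show (k+3)+m+1 = m+k+4 by omega]
    exact coeff_id m k
  -- the combined sums
  have HS1 : HasSum (fun k => bask (m+5+1) k x * (((k:ℝ)+1)*((k:ℝ)+2)*((k:ℝ)+3)))
      (((m:ℝ)+6)*((m:ℝ)+7)*((m:ℝ)+8)*x^3 + 9*(((m:ℝ)+6)*((m:ℝ)+7))*x^2
        + 18*((m:ℝ)+6)*x + 6) := by
    have h := ((bask_hasSum3 (m+5) hx).add ((bask_hasSum2 (m+5) hx).mul_left 9)).add
      (((bask_hasSum1 (m+5) hx).mul_left 18).add ((bask_hasSum (m+5) hx).mul_left 6))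
    convert h using 1
    · funext k; ring
    · push_cast; ring
  have HS2 : HasSum (fun k => bask (m+5+1) k x * (((k:ℝ)+2)*((k:ℝ)+3)*((k:ℝ)+4)))
      (((m:ℝ)+6)*((m:ℝ)+7)*((m:ℝ)+8)*x^3 + 12*(((m:ℝ)+6)*((m:ℝ)+7))*x^2
        + 36*((m:ℝ)+6)*x + 24) := by
    have h := ((bask_hasSum3 (m+5) hx).add ((bask_hasSum2 (m+5) hx).mul_left 12)).add
      (((bask_hasSum1 (m+5) hx).mul_left 36).add ((bask_hasSum (m+5) hx).mul_left 24))
    convert h using 1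
    · funext k; ring
    · push_cast; ring
  -- shifted sum
  set g : ℕ → ℝ := fun k => (if k = 0 then 0 else bask (m+5+1) (k-1) x)
      * (((k:ℝ)+1)*((k:ℝ)+2)*((k:ℝ)+3)) with hg
  have HSg : HasSum g
      (((m:ℝ)+6)*((m:ℝ)+7)*((m:ℝ)+8)*x^3 + 12*(((m:ℝ)+6)*((m:ℝ)+7))*x^2
        + 36*((m:ℝ)+6)*x + 24) := by
    have h2 := (hasSum_nat_add_iff (f := g) 1).mp
      (by
        convert HS2 using 2 with k
        · rfl
        simp only [hg, Nat.add_sub_cancel, if_neg (Nat.succ_ne_zero k)]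
        push_cast; ring)
    simpa [hg] using h2
  -- total sum
  have Total : HasSum
      (fun k => p1 a0 a1 (m+5) k x * ∫ t in Set.Ioi (0:ℝ), bask (m+5) k t * t ^ 3)
      ((a0 (m+5) + a1 (m+5) * x)
          * (((m:ℝ)+6)*((m:ℝ)+7)*((m:ℝ)+8)*x^3 + 9*(((m:ℝ)+6)*((m:ℝ)+7))*x^2
            + 18*((m:ℝ)+6)*x + 6)
          / (((m:ℝ)+1)*((m:ℝ)+2)*((m:ℝ)+3)*((m:ℝ)+4))
        + (a0 (m+5) - a1 (m+5) * (1 + x))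
          * (((m:ℝ)+6)*((m:ℝ)+7)*((m:ℝ)+8)*x^3 + 12*(((m:ℝ)+6)*((m:ℝ)+7))*x^2
            + 36*((m:ℝ)+6)*x + 24)
          / (((m:ℝ)+1)*((m:ℝ)+2)*((m:ℝ)+3)*((m:ℝ)+4))) := by
    have h := (HS1.mul_left ((a0 (m+5) + a1 (m+5) * x) /
        (((m:ℝ)+1)*((m:ℝ)+2)*((m:ℝ)+3)*((m:ℝ)+4)))).add
      (HSg.mul_left ((a0 (m+5) - a1 (m+5) * (1 + x)) /
        (((m:ℝ)+1)*((m:ℝ)+2)*((m:ℝ)+3)*((m:ℝ)+4))))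
    convert h using 1
    · rfl
    · funext k
      rw [hIval k]
      simp only [p1, hg]
      ring
    · ring
  refine ⟨hint, Total.summable.abs, ?_⟩
  rw [V1, Total.tsum_eq]
  have e1 : ((m:ℝ)+1) ≠ 0 := by positivity
  have e2 : ((m:ℝ)+2) ≠ 0 := by positivity
  have e3 : ((m:ℝ)+3) ≠ 0 := by positivity
  have e4 : ((m:ℝ)+4) ≠ 0 := by positivity
  push_cast
  linear_combination final_alg (m:ℝ) (a0 (m+5)) (a1 (m+5)) x e1 e2 e3 e4
end
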